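/- For ρ ∈ (0,1), λ ∈ (0,1], σ ∈ [0,1], ℓ₀ > 0: the ratio (ℓ₀/(1-ρ^{1/λ})) / (ℓ₀·(1 + σρ^{2/λ}/(1-σρ^{1/λ})) + (1-σ)ρ^{2/λ}·Δℓ/(1-(1-σ)ρ^{1/λ})) tends to (1-σρ^{1/λ})/((1-ρ^{1/λ})(1-σρ^{1/λ}+σρ^{2/λ})) ≥ (1-σρ^{1/λ})/(1-ρ^{1/λ}) · 1/(1+σρ^{2/λ}/(1-σρ^{1/λ})) as Δℓ → 0⁺; in particular this limit is at least (1-σρ^{1/λ})/(1-ρ^{1/λ}) when σρ^{2/λ} terms vanish (σ → 0) and tends to +∞ as ρ → 1⁻ and σ → 0. -/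

import Mathlib

open Real Filter

/-- In the dynamic-Markov-chain extension, the myopic/optimal cost ratio tends
to (1-σρ^{1/λ})/((1-ρ^{1/λ})(1-σρ^{1/λ}+σρ^{2/λ})) as Δℓ → 0⁺; this limit is
at least (1-σρ^{1/λ})/(1-ρ^{1/λ}) · 1/(1+σρ^{2/λ}/(1-σρ^{1/λ})), equals
1/(1-ρ^{1/λ}) when σ = 0, and 1/(1-ρ^{1/λ}) blows up as ρ → 1⁻. -/
theorem dynamic_poa_ratio_limit (ρ lam σ ℓ0 : ℝ)
    (hρ : ρ ∈ Set.Ioo (0:ℝ) 1) (hlam : lam ∈ Set.Ioc (0:ℝ) 1)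
    (hσ : σ ∈ Set.Icc (0:ℝ) 1) (hℓ : 0 < ℓ0) :
    Tendsto
      (fun Δℓ : ℝ =>
        (ℓ0 / (1 - ρ ^ ((1:ℝ)/lam))) /
          (ℓ0 * (1 + σ * ρ ^ ((2:ℝ)/lam) / (1 - σ * ρ ^ ((1:ℝ)/lam))) +
            (1 - σ) * ρ ^ ((2:ℝ)/lam) * Δℓ / (1 - (1 - σ) * ρ ^ ((1:ℝ)/lam))))
      (nhdsWithin 0 (Set.Ioi 0))
      (nhds ((1 - σ * ρ ^ ((1:ℝ)/lam)) /
        ((1 - ρ ^ ((1:ℝ)/lam)) *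
          (1 - σ * ρ ^ ((1:ℝ)/lam) + σ * ρ ^ ((2:ℝ)/lam))))) ∧
    (1 - σ * ρ ^ ((1:ℝ)/lam)) /
        ((1 - ρ ^ ((1:ℝ)/lam)) *
          (1 - σ * ρ ^ ((1:ℝ)/lam) + σ * ρ ^ ((2:ℝ)/lam))) ≥
      (1 - σ * ρ ^ ((1:ℝ)/lam)) / (1 - ρ ^ ((1:ℝ)/lam)) *
        (1 / (1 + σ * ρ ^ ((2:ℝ)/lam) / (1 - σ * ρ ^ ((1:ℝ)/lam)))) ∧
    (σ = 0 →
      (1 - σ * ρ ^ ((1:ℝ)/lam)) /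
          ((1 - ρ ^ ((1:ℝ)/lam)) *
            (1 - σ * ρ ^ ((1:ℝ)/lam) + σ * ρ ^ ((2:ℝ)/lam))) =
        1 / (1 - ρ ^ ((1:ℝ)/lam))) ∧
    Tendsto (fun p : ℝ => 1 / (1 - p ^ ((1:ℝ)/lam)))
      (nhdsWithin 1 (Set.Iio 1)) atTop := by
  obtain ⟨hρ0, hρ1⟩ := hρ
  obtain ⟨hlam0, hlam1⟩ := hlam
  obtain ⟨hσ0, hσ1⟩ := hσ
  set r := ρ ^ ((1:ℝ)/lam) with hrdef
  set s := ρ ^ ((2:ℝ)/lam) with hsdef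
  have hr0 : 0 < r := rpow_pos_of_pos hρ0 _
  have hs0 : 0 < s := rpow_pos_of_pos hρ0 _
  have hr1 : r < 1 := by
    apply rpow_lt_one hρ0.le hρ1
    positivity
  have hσr : σ * r < 1 :=
    lt_of_le_of_lt (by nlinarith) hr1
  have hA : 0 < 1 - σ * r := by linarith
  have hB : 0 < 1 - σ * r + σ * s := by nlinarith
  have h1r : 0 < 1 - r := by linarith
  have hσs : 0 ≤ σ * s := by positivity
  have hD0 : 0 < ℓ0 * (1 + σ * s / (1 - σ * r)) := by positivity
  refine ⟨?_, ?_, ?_, ?_⟩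
  · have hcont : ContinuousAt
        (fun Δℓ : ℝ =>
          (ℓ0 / (1 - r)) /
            (ℓ0 * (1 + σ * s / (1 - σ * r)) +
              (1 - σ) * s * Δℓ / (1 - (1 - σ) * r))) 0 := by
      apply ContinuousAt.div continuousAt_const
      · exact continuousAt_const.add ((continuousAt_const.mul continuousAt_id).div_const _)
      · simpa using hD0.ne'
    have h2 := hcont.tendsto.mono_left (nhdsWithin_le_nhds (s := Set.Ioi (0:ℝ)))
    convert h2 using 2
    simp only [mul_zero, zero_div, add_zero, zero_mul]
    rw [eq_comm]
    have hAne : 1 - σ * r ≠ 0 := hA.ne'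
    have hBne : 1 - σ * r + σ * s ≠ 0 := hB.ne'
    rw [one_add_div hAne, div_div, mul_div_assoc', mul_div_assoc', div_div_eq_mul_div,
      div_eq_div_iff (mul_ne_zero h1r.ne' (mul_ne_zero hℓ.ne' hBne)) (mul_ne_zero h1r.ne' hBne)]
    ring
  · rw [ge_iff_le]
    have key : (1 - σ * r) / (1 - r) *
        (1 / (1 + σ * s / (1 - σ * r))) =
        ((1 - σ * r) * (1 - σ * r)) / ((1 - r) * (1 - σ * r + σ * s)) := by
      field_simp
      try ring
    rw [key]
    apply div_le_div₀ (by positivity) ?_ (by positivity) le_rfl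
    nlinarith [mul_nonneg hσ0 hr0.le]
  · intro h
    simp [h]
  · have hmem : Set.Ioo (0:ℝ) 1 ∈ nhdsWithin (1:ℝ) (Set.Iio 1) := by
      rw [show Set.Ioo (0:ℝ) 1 = Set.Ioi 0 ∩ Set.Iio 1 from rfl]
      exact Filter.inter_mem
        (mem_nhdsWithin_of_mem_nhds (Ioi_mem_nhds one_pos))
        self_mem_nhdsWithin
    have h1 : Tendsto (fun p : ℝ => 1 - p ^ ((1:ℝ)/lam))
        (nhdsWithin 1 (Set.Iio 1)) (nhdsWithin 0 (Set.Ioi 0)) := by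
      rw [tendsto_nhdsWithin_iff]
      constructor
      · have : ContinuousAt (fun p : ℝ => 1 - p ^ ((1:ℝ)/lam)) 1 := by
          apply continuousAt_const.sub
          exact Real.continuousAt_rpow_const 1 _ (Or.inl one_ne_zero)
        have h0 : (1:ℝ) - (1:ℝ) ^ ((1:ℝ)/lam) = 0 := by
          rw [Real.one_rpow]; ring
        rw [← h0]
        exact this.tendsto.mono_left nhdsWithin_le_nhds
      · filter_upwards [hmem] with p hp
        have : p ^ ((1:ℝ)/lam) < 1 :=
          rpow_lt_one hp.1.le hp.2 (by positivity)
        simpa using this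
    have := (tendsto_inv_nhdsGT_zero).comp h1
    simpa [one_div, Function.comp_def] using this
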